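/- For D ∈ (0,1), the function h(u) = H(u) - H(u+D-1) maps the interval [1-D, 1-D/2) bijectively onto (0, H(1-D)], where the image is taken in reversed order (h(1-D) = H(1-D) and h(u) → 0 as u → 1-D/2). -/

import Mathlib

open Real Set Filter

/-- Binary entropy function (base-2 logarithm). -/
noncomputable def binH (u : ℝ) : ℝ := -(u * Real.logb 2 u) - (1 - u) * Real.logb 2 (1 - u)

lemma binH_eq (u : ℝ) :
    binH u = (Real.negMulLog u + Real.negMulLog (1 - u)) / Real.log 2 := by
  simp only [binH, Real.negMulLog, Real.logb]
  ring

lemma binH_continuous : Continuous binH := by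
  have : binH = fun u => (Real.negMulLog u + Real.negMulLog (1 - u)) / Real.log 2 :=
    funext binH_eq
  rw [this]
  fun_prop

@[simp] lemma binH_zero : binH 0 = 0 := by simp [binH]

lemma binH_one_sub (u : ℝ) : binH (1 - u) = binH u := by
  rw [binH_eq, binH_eq]
  ring_nf

lemma binH_hasDerivAt {u : ℝ} (h0 : 0 < u) (h1 : u < 1) :
    HasDerivAt binH ((Real.log (1 - u) - Real.log u) / Real.log 2) u := by
  have h1' : (1 : ℝ) - u ≠ 0 := by linarith
  have hu := Real.hasDerivAt_negMulLog (ne_of_gt h0)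
  have hv : HasDerivAt (fun x : ℝ => Real.negMulLog (1 - x))
      ((-Real.log (1 - u) - 1) * (-1)) u :=
    (Real.hasDerivAt_negMulLog h1').comp u (((hasDerivAt_id u).const_sub 1))
  have := (hu.add hv).div_const (Real.log 2)
  have heq : binH = fun x => (Real.negMulLog x + Real.negMulLog (1 - x)) / Real.log 2 :=
    funext binH_eq
  rw [heq]
  exact this.congr_deriv (by ring)

theorem binH_sub_bijOn (D : ℝ) (hD : D ∈ Set.Ioo (0:ℝ) 1) :
    Set.BijOn (fun u => binH u - binH (u + D - 1))
      (Set.Ico (1 - D) (1 - D / 2)) (Set.Ioc 0 (binH (1 - D))) ∧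
    (binH (1 - D) - binH ((1 - D) + D - 1) = binH (1 - D)) ∧
    Filter.Tendsto (fun u => binH u - binH (u + D - 1))
      (nhdsWithin (1 - D / 2) (Set.Iio (1 - D / 2))) (nhds 0) := by
  obtain ⟨hD0, hD1⟩ := hD
  set a : ℝ := 1 - D with ha
  set b : ℝ := 1 - D / 2 with hb
  set f : ℝ → ℝ := fun u => binH u - binH (u + D - 1) with hf
  have hab : a < b := by simp only [ha, hb]; linarith
  have hfcont : Continuous f := by
    apply binH_continuous.sub
    exact binH_continuous.comp (by continuity)
  -- value at a
  have hfa : f a = binH (1 - D) := by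
    simp only [hf, ha]
    norm_num
  -- value at b
  have hfb : f b = 0 := by
    have h1 : b + D - 1 = D / 2 := by simp only [hb]; ring
    have h2 : b = 1 - D / 2 := hb
    simp only [hf, h1, h2, binH_one_sub, sub_self]
    rw [show 1 - D / 2 + D - 1 = D / 2 by ring, sub_self]
  -- derivative negative on Ioo a b
  have hderiv : ∀ u ∈ Set.Ioo a b, HasDerivAt f
      (((Real.log (1 - u) - Real.log u) - (Real.log (1 - (u + D - 1)) - Real.log (u + D - 1)))
        / Real.log 2) u := by
    intro u hu
    have hu0 : 0 < u := by have := hu.1; simp only [ha] at this; linarith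
    have hu1 : u < 1 := by have := hu.2; simp only [hb] at this; linarith
    have hv0 : 0 < u + D - 1 := by have := hu.1; simp only [ha] at this; linarith
    have hv1 : u + D - 1 < 1 := by have := hu.2; simp only [hb] at this; linarith
    have h1 := binH_hasDerivAt hu0 hu1
    have h2 : HasDerivAt (fun x : ℝ => binH (x + D - 1))
        ((Real.log (1 - (u + D - 1)) - Real.log (u + D - 1)) / Real.log 2) u := by
      have := (binH_hasDerivAt hv0 hv1).comp u
        (((hasDerivAt_id u).add_const D).sub_const 1)
      simpa [Function.comp_def] using this
    have := h1.sub h2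
    exact this.congr_deriv (by ring)
  have hdneg : ∀ u ∈ Set.Ioo a b,
      ((Real.log (1 - u) - Real.log u) - (Real.log (1 - (u + D - 1)) - Real.log (u + D - 1)))
        / Real.log 2 < 0 := by
    intro u hu
    have hu0 : 0 < u := by have := hu.1; simp only [ha] at this; linarith
    have hu1 : u < 1 := by have := hu.2; simp only [hb] at this; linarith
    have hv0 : 0 < u + D - 1 := by have := hu.1; simp only [ha] at this; linarith
    have hv1 : u + D - 1 < 1 := by have := hu.2; simp only [hb] at this; linarith
    apply div_neg_of_neg_of_pos _ (Real.log_pos one_lt_two)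
    have key : (1 - u) * (u + D - 1) < u * (1 - (u + D - 1)) := by nlinarith
    have hlog : Real.log ((1 - u) * (u + D - 1)) < Real.log (u * (1 - (u + D - 1))) :=
      Real.log_lt_log (mul_pos (by linarith) (by linarith)) key
    rw [Real.log_mul (by linarith) (by linarith), Real.log_mul (by linarith) (by linarith)]
      at hlog
    linarith
  have hanti : StrictAntiOn f (Set.Icc a b) := by
    apply strictAntiOn_of_deriv_neg (convex_Icc a b) hfcont.continuousOn
    intro u hu
    rw [interior_Icc] at hu
    rw [(hderiv u hu).deriv]
    exact hdneg u hu
  constructor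
  · refine ⟨?_, ?_, ?_⟩
    · intro u hu
      have huI : u ∈ Set.Icc a b := ⟨hu.1, hu.2.le⟩
      constructor
      · have := hanti huI (Set.right_mem_Icc.2 hab.le) hu.2
        rw [hfb] at this; exact this
      · rcases eq_or_lt_of_le hu.1 with h | h
        · rw [← h, ← hfa]
        · have := hanti (Set.left_mem_Icc.2 hab.le) huI h
          rw [hfa] at this; exact this.le
    · exact (hanti.injOn).mono Set.Ico_subset_Icc_self
    · intro y hy
      have hyI : y ∈ Set.Icc (f b) (f a) := by
        rw [hfa, hfb]; exact ⟨hy.1.le, hy.2⟩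
      obtain ⟨x, hx, hfx⟩ := intermediate_value_Icc' hab.le hfcont.continuousOn hyI
      refine ⟨x, ⟨hx.1, ?_⟩, hfx⟩
      rcases eq_or_lt_of_le hx.2 with h | h
      · exfalso
        rw [h, hfb] at hfx
        exact absurd hfx.symm (ne_of_gt hy.1)
      · exact h
  · constructor
    · have : (1 - D) + D - 1 = 0 := by ring
      rw [this, binH_zero, sub_zero]
    · have : Filter.Tendsto f (nhdsWithin b (Set.Iio b)) (nhds (f b)) :=
        (hfcont.continuousAt).continuousWithinAt.tendsto
      rwa [hfb] at this
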